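/- Let (i,j) with i ≠ j and let j = i_0, i_1, …, i_P = i be a path with k_{i_p i_{p−1}} > 0 for p = 1,…,P in which no ordered edge is repeated, and set μ := min_{1 ≤ p ≤ P} k_{i_p i_{p−1}} η_{i_{p−1}}. Then for every U = (U_1,…,U_N) with U_i ∈ L²(ℝ^d, M_i), one has −⟨LU,U⟩ ≥ (μ/(2P)) ∫∫ (U_i(v) − U_j(v'))² dM_j(v') dM_i(v). -/

import Mathlib

open Finset MeasureTheory

private lemma sq_expand' {α : Type*} [MeasurableSpace α] (ν : Measure α) [IsProbabilityMeasure ν]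
    (f : α → ℝ) (hf : Integrable f ν) (hf2 : Integrable (fun x => f x ^ 2) ν) (r : ℝ) :
    ∫ x, (r - f x) ^ 2 ∂ν = r ^ 2 - 2 * r * (∫ x, f x ∂ν) + ∫ x, f x ^ 2 ∂ν := by
  have h1 : ∀ x, (r - f x) ^ 2 = r ^ 2 - (2 * r) * f x + f x ^ 2 := fun x => by ring
  have hI1 : Integrable (fun x => r ^ 2 - (2 * r) * f x) ν :=
    (integrable_const _).sub (hf.const_mul _)
  simp_rw [h1]
  rw [integral_add hI1 hf2, integral_sub (integrable_const _) (hf.const_mul _),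
    integral_const, integral_const_mul]
  simp [measure_univ]


private lemma alg_key (N : ℕ) (k : Fin N → Fin N → ℝ) (hk : ∀ i j, 0 ≤ k i j)
    (η : Fin N → ℝ) (hηpos : ∀ i, 0 < η i)
    (hbal : ∀ m, ∑ n, k m n * η n = ∑ n, k n m * η m)
    (s t : Fin N → ℝ) (hvar : ∀ m, (t m) ^ 2 ≤ s m)
    (i j : Fin N) (P : ℕ) (c : ℕ → Fin N) (hP : 1 ≤ P)
    (hc0 : c 0 = j) (hcP : c P = i)
    (hcpos : ∀ p, 1 ≤ p → p ≤ P → 0 < k (c p) (c (p - 1)))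
    (hnorep : ∀ p q, 1 ≤ p → p ≤ P → 1 ≤ q → q ≤ P → p ≠ q →
      (c (p - 1), c p) ≠ (c (q - 1), c q))
    (μ : ℝ)
    (hμ : IsLeast
      {x : ℝ | ∃ p, 1 ≤ p ∧ p ≤ P ∧ x = k (c p) (c (p - 1)) * η (c (p - 1))} μ) :
    -((∑ m, ∑ n, k m n * η n * (t n * t m)) - ∑ m, ∑ n, k n m * η m * s m)
      ≥ (μ / (2 * (P : ℝ))) * (s i + s j - 2 * (t i * t j)) := by
  set F : Fin N → Fin N → ℝ :=
    fun m n => k m n * η n * (s m + s n - 2 * (t m * t n)) with hF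
  have hF0 : ∀ m n, 0 ≤ F m n := by
    intro m n
    apply mul_nonneg (mul_nonneg (hk m n) (hηpos n).le)
    nlinarith [hvar m, hvar n, sq_nonneg (t m - t n)]
  -- rewrite -(X - Y) as (∑∑ F)/2
  have haveA : ∑ m, ∑ n, k m n * η n * s m = ∑ m, ∑ n, k n m * η m * s m := by
    refine Finset.sum_congr rfl fun m _ => ?_
    rw [show (∑ n, k m n * η n * s m) = (∑ n, k m n * η n) * s m from
      (Finset.sum_mul _ _ _).symm, hbal m, Finset.sum_mul]
  have haveB : ∑ m, ∑ n, k m n * η n * s n = ∑ m, ∑ n, k n m * η m * s m := by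
    rw [Finset.sum_comm]
  have key1 : (∑ m, ∑ n, F m n)
      = 2 * ((∑ m, ∑ n, k n m * η m * s m) - ∑ m, ∑ n, k m n * η n * (t n * t m)) := by
    have e0 : ∀ m n : Fin N, F m n
        = (k m n * η n * s m + k m n * η n * s n) - 2 * (k m n * η n * (t n * t m)) := by
      intro m n; simp only [hF]; ring
    calc (∑ m, ∑ n, F m n)
        = ∑ m, ∑ n, ((k m n * η n * s m + k m n * η n * s n)
            - 2 * (k m n * η n * (t n * t m))) := by simp_rw [e0]
      _ = ((∑ m, ∑ n, k m n * η n * s m) + (∑ m, ∑ n, k m n * η n * s n))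
            - 2 * (∑ m, ∑ n, k m n * η n * (t n * t m)) := by
          simp_rw [Finset.sum_sub_distrib, Finset.sum_add_distrib, ← Finset.mul_sum]
      _ = _ := by rw [haveA, haveB]; ring
  -- path sum is below total sum
  have hinj : ∀ q1 ∈ Finset.range P, ∀ q2 ∈ Finset.range P,
      (fun q => (c (q + 1), c q)) q1 = (fun q => (c (q + 1), c q)) q2 → q1 = q2 := by
    intro q1 h1 q2 h2 heq
    by_contra hne
    simp only [Prod.mk.injEq] at heq
    refine hnorep (q1 + 1) (q2 + 1) (by omega) ?_ (by omega) ?_ (by omega) ?_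
    · have := Finset.mem_range.mp h1; omega
    · have := Finset.mem_range.mp h2; omega
    · simp [heq.1, heq.2]
  have hpath : ∑ q ∈ Finset.range P, F (c (q + 1)) (c q) ≤ ∑ m, ∑ n, F m n := by
    rw [← Finset.sum_product']
    have himg : (∑ p ∈ (Finset.range P).image (fun q => (c (q + 1), c q)), F p.1 p.2)
        = ∑ q ∈ Finset.range P, F (c (q + 1)) (c q) := Finset.sum_image hinj
    rw [← himg]
    refine Finset.sum_le_sum_of_subset_of_nonneg ?_ (fun x _ _ => hF0 x.1 x.2)
    intro x _
    simp [Finset.mem_product]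
  -- μ bounds
  have hμpos : 0 < μ := by
    obtain ⟨p, hp1, hpP, hpe⟩ := hμ.1
    rw [hpe]; exact mul_pos (hcpos p hp1 hpP) (hηpos _)
  have hμle : ∀ q ∈ Finset.range P, μ ≤ k (c (q + 1)) (c q) * η (c q) := by
    intro q hq
    refine hμ.2 ⟨q + 1, by omega, ?_, by simp⟩
    have := Finset.mem_range.mp hq; omega
  -- energy along the path
  set e : ℕ → ℝ := fun q => s (c (q + 1)) + s (c q) - 2 * (t (c (q + 1)) * t (c q)) with he
  have he0 : ∀ q, 0 ≤ e q := by
    intro q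
    simp only [he]
    nlinarith [hvar (c (q + 1)), hvar (c q), sq_nonneg (t (c (q + 1)) - t (c q))]
  have h2 : μ * ∑ q ∈ Finset.range P, e q ≤ ∑ q ∈ Finset.range P, F (c (q + 1)) (c q) := by
    rw [Finset.mul_sum]
    refine Finset.sum_le_sum fun q hq => ?_
    exact mul_le_mul_of_nonneg_right (hμle q hq) (he0 q)
  -- Cauchy–Schwarz for telescoping means
  have hcs : (t i - t j) ^ 2 ≤ (P : ℝ) * ∑ q ∈ Finset.range P, (t (c (q + 1)) - t (c q)) ^ 2 := by
    have h1 := sq_sum_le_card_mul_sum_sq (s := Finset.range P)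
      (f := fun q => t (c (q + 1)) - t (c q))
    rw [Finset.sum_range_sub (fun q => t (c q)) P] at h1
    simpa [hc0, hcP] using h1
  -- endpoints of variance sums
  have hP1 : P - 1 + 1 = P := by omega
  have hVsum1 : s i - t i ^ 2 ≤ ∑ q ∈ Finset.range P, (s (c (q + 1)) - t (c (q + 1)) ^ 2) := by
    have h := Finset.single_le_sum (f := fun q => s (c (q + 1)) - t (c (q + 1)) ^ 2)
      (fun q _ => sub_nonneg.mpr (hvar _)) (show P - 1 ∈ Finset.range P by
        simp; omega)
    simpa [hP1, hcP] using h
  have hVsum0 : s j - t j ^ 2 ≤ ∑ q ∈ Finset.range P, (s (c q) - t (c q) ^ 2) := by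
    have h := Finset.single_le_sum (f := fun q => s (c q) - t (c q) ^ 2)
      (fun q _ => sub_nonneg.mpr (hvar _)) (show 0 ∈ Finset.range P by simp; omega)
    simpa [hc0] using h
  have hsplit : ∑ q ∈ Finset.range P, e q
      = (∑ q ∈ Finset.range P, (s (c (q + 1)) - t (c (q + 1)) ^ 2))
        + (∑ q ∈ Finset.range P, (s (c q) - t (c q) ^ 2))
        + ∑ q ∈ Finset.range P, (t (c (q + 1)) - t (c q)) ^ 2 := by
    rw [← Finset.sum_add_distrib, ← Finset.sum_add_distrib]
    refine Finset.sum_congr rfl fun q _ => ?_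
    simp only [he]; ring
  have hPR : (1 : ℝ) ≤ (P : ℝ) := by exact_mod_cast hP
  have hV1nn : 0 ≤ ∑ q ∈ Finset.range P, (s (c (q + 1)) - t (c (q + 1)) ^ 2) :=
    Finset.sum_nonneg fun q _ => sub_nonneg.mpr (hvar _)
  have hV2nn : 0 ≤ ∑ q ∈ Finset.range P, (s (c q) - t (c q) ^ 2) :=
    Finset.sum_nonneg fun q _ => sub_nonneg.mpr (hvar _)
  have hPe : s i + s j - 2 * (t i * t j) ≤ (P : ℝ) * ∑ q ∈ Finset.range P, e q := by
    nlinarith [mul_nonneg (sub_nonneg.mpr hPR) hV1nn, mul_nonneg (sub_nonneg.mpr hPR) hV2nn,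
      hcs, hVsum1, hVsum0, hsplit, sq_nonneg (t i - t j)]
  have hPpos : (0 : ℝ) < (P : ℝ) := by positivity
  have hfin : (μ / (2 * (P : ℝ))) * (s i + s j - 2 * (t i * t j)) ≤ (∑ m, ∑ n, F m n) / 2 := by
    have step1 : (μ / (2 * (P : ℝ))) * (s i + s j - 2 * (t i * t j))
        ≤ (μ / (2 * (P : ℝ))) * ((P : ℝ) * ∑ q ∈ Finset.range P, e q) :=
      mul_le_mul_of_nonneg_left hPe (by positivity)
    have step2 : (μ / (2 * (P : ℝ))) * ((P : ℝ) * ∑ q ∈ Finset.range P, e q)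
        = (μ * ∑ q ∈ Finset.range P, e q) / 2 := by
      field_simp
    linarith [h2, hpath, step1, step2.le, step2.ge]
  linarith [hfin, key1]

/-- Single-path species-velocity estimate: if `j = i_0, …, i_P = i` is a path with positive
rates and no repeated ordered edge, and `μ = min_p k_{i_p i_{p−1}} η_{i_{p−1}}`, then
`−⟨LU,U⟩ ≥ (μ/(2P)) ∫∫ (U_i(v) − U_j(v'))² dM_j(v') dM_i(v)`. -/
theorem statement10
    (N d : ℕ) (hN : 2 ≤ N) (hd : 1 ≤ d)
    (k : Fin N → Fin N → ℝ) (hk : ∀ i j, 0 ≤ k i j)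
    (η : Fin N → ℝ) (hηpos : ∀ i, 0 < η i) (hηsum : ∑ i, η i = 1)
    (hηbal : ∀ i, ∑ j, (k i j * η j - k j i * η i) = 0)
    (i j : Fin N) (hij : i ≠ j)
    (P : ℕ) (c : ℕ → Fin N)
    (hP : 1 ≤ P)
    (hc0 : c 0 = j) (hcP : c P = i)
    (hcpos : ∀ p, 1 ≤ p → p ≤ P → 0 < k (c p) (c (p - 1)))
    (hnorep : ∀ p q, 1 ≤ p → p ≤ P → 1 ≤ q → q ≤ P → p ≠ q →
      (c (p - 1), c p) ≠ (c (q - 1), c q))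
    (μ : ℝ)
    (hμ : IsLeast
      {x : ℝ | ∃ p, 1 ≤ p ∧ p ≤ P ∧ x = k (c p) (c (p - 1)) * η (c (p - 1))} μ)
    (M : Fin N → Measure (Fin d → ℝ))
    (hM : ∀ m, IsProbabilityMeasure (M m))
    (U : Fin N → (Fin d → ℝ) → ℝ)
    (hU : ∀ m, MemLp (U m) 2 (M m)) :
    -((∑ m, ∑ n, k m n * η n * ∫ v, ∫ w, U n w * U m v ∂(M n) ∂(M m))
        - ∑ m, ∑ n, k n m * η m * ∫ v, (U m v) ^ 2 ∂(M m))
      ≥ (μ / (2 * P)) * ∫ v, ∫ w, (U i v - U j w) ^ 2 ∂(M j) ∂(M i) := by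
  have hInt : ∀ m, Integrable (U m) (M m) := fun m => by
    haveI := hM m; exact (hU m).integrable one_le_two
  have hInt2 : ∀ m, Integrable (fun v => (U m v) ^ 2) (M m) := fun m => by
    haveI := hM m; exact (hU m).integrable_sq
  -- abbreviations
  set s : Fin N → ℝ := fun m => ∫ v, (U m v) ^ 2 ∂(M m) with hs
  set t : Fin N → ℝ := fun m => ∫ v, U m v ∂(M m) with ht
  -- balance
  have hbal : ∀ m : Fin N, ∑ n, k m n * η n = ∑ n, k n m * η m := by
    intro m
    have h := hηbal m
    rw [Finset.sum_sub_distrib] at h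
    linarith
  -- variance nonneg
  have hvar : ∀ m, (t m) ^ 2 ≤ s m := by
    intro m
    haveI := hM m
    have h0 : 0 ≤ ∫ v, (t m - U m v) ^ 2 ∂(M m) :=
      integral_nonneg fun v => sq_nonneg _
    rw [sq_expand' (M m) (U m) (hInt m) (hInt2 m) (t m)] at h0
    have hts : (∫ v, U m v ∂(M m)) = t m := rfl
    have hss : (∫ v, (U m v) ^ 2 ∂(M m)) = s m := rfl
    rw [hts, hss] at h0
    nlinarith [h0]
  -- product double integral
  have hprod : ∀ m n : Fin N, (∫ v, ∫ w, U n w * U m v ∂(M n) ∂(M m)) = t n * t m := by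
    intro m n
    simp_rw [integral_mul_const, integral_const_mul]
    rfl
  -- squared-difference double integral
  have hE : (∫ v, ∫ w, (U i v - U j w) ^ 2 ∂(M j) ∂(M i))
      = s i + s j - 2 * (t i * t j) := by
    haveI := hM i; haveI := hM j
    have h1 : ∀ v, (∫ w, (U i v - U j w) ^ 2 ∂(M j))
        = (U i v) ^ 2 - (2 * t j) * U i v + s j := by
      intro v
      rw [sq_expand' (M j) (U j) (hInt j) (hInt2 j) (U i v)]
      ring
    simp_rw [h1]
    have hI1 : Integrable (fun v => (U i v) ^ 2 - (2 * t j) * U i v) (M i) :=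
      (hInt2 i).sub ((hInt i).const_mul _)
    rw [integral_add hI1 (integrable_const _), integral_sub (hInt2 i) ((hInt i).const_mul _),
      integral_const, integral_const_mul]
    simp [measure_univ]
    ring
  have hG1 : (∑ m, ∑ n, k m n * η n * ∫ v, ∫ w, U n w * U m v ∂(M n) ∂(M m))
      = ∑ m, ∑ n, k m n * η n * (t n * t m) :=
    Finset.sum_congr rfl fun m _ => Finset.sum_congr rfl fun n _ => by rw [hprod]
  have hG2 : (∑ m, ∑ n, k n m * η m * ∫ v, (U m v) ^ 2 ∂(M m))
      = ∑ m, ∑ n, k n m * η m * s m := rfl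
  rw [hG1, hG2, hE]
  exact alg_key N k hk η hηpos hbal s t hvar i j P c hP hc0 hcP hcpos hnorep μ hμ
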